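/- Let 0 < λ < 1 and P ∈ ℝ. (i) If ψ : ℝ → ℝ is a strictly positive, twice differentiable, 2π-periodic classical solution of the homogeneous Euler ODE with parameters (λ, P), then its (constant) Bernoulli function satisfies B < 0. (ii) If (ψ, (a, b)) is a local solution of the homogeneous Euler ODE with parameters (λ, P), then its (constant) Bernoulli function satisfies B ≥ 0. -/

import Mathlib

open Real Set

lemma bern_deriv_zero (lam P : ℝ) (hlam0 : 0 < lam)
    {ψ ψ' ψ'' : ℝ → ℝ} {θ : ℝ} (hpos : 0 < ψ θ)
    (h1 : HasDerivAt ψ (ψ' θ) θ) (h2 : HasDerivAt ψ' (ψ'' θ) θ)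
    (hode : 2 * (lam - 1) * P =
      -(lam - 1) * (ψ' θ) ^ 2 + lam ^ 2 * (ψ θ) ^ 2 + lam * (ψ'' θ) * (ψ θ)) :
    HasDerivAt (fun t => (2 * P + lam ^ 2 * (ψ t) ^ 2 + (ψ' t) ^ 2) * (ψ t) ^ (2 / lam - 2))
      0 θ := by
  have hF : HasDerivAt (fun t => 2 * P + lam ^ 2 * (ψ t) ^ 2 + (ψ' t) ^ 2)
      (lam ^ 2 * (2 * ψ θ * ψ' θ) + 2 * ψ' θ * ψ'' θ) θ := by
    have := (((h1.pow 2).const_mul (lam ^ 2)).const_add (2 * P)).add (h2.pow 2)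
    refine this.congr_deriv ?_
    ring
  have hR : HasDerivAt (fun t => (ψ t) ^ (2 / lam - 2))
      ((2 / lam - 2) * (ψ θ) ^ (2 / lam - 2 - 1) * ψ' θ) θ :=
    (Real.hasDerivAt_rpow_const (Or.inl hpos.ne')).comp θ h1
  have hM := hF.mul hR
  refine hM.congr_deriv ?_
  symm
  have hsplit : (ψ θ) ^ (2 / lam - 2) = (ψ θ) ^ (2 / lam - 2 - 1) * ψ θ := by
    rw [← Real.rpow_add_one hpos.ne']
    ring_nf
  rw [hsplit]
  have hl : lam ≠ 0 := hlam0.ne'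
  set K := (ψ θ) ^ (2 / lam - 2 - 1) with hK
  field_simp
  linear_combination (2 * K * ψ' θ) * hode

lemma const_of_deriv0_Ioo {f : ℝ → ℝ} {a b : ℝ}
    (hd : ∀ x ∈ Ioo a b, HasDerivAt f 0 x) :
    ∀ x ∈ Ioo a b, ∀ y ∈ Ioo a b, f x = f y := by
  have key : ∀ x ∈ Ioo a b, ∀ y ∈ Ioo a b, x ≤ y → f y = f x := by
    intro x hx y hy hxy
    have hsub : Icc x y ⊆ Ioo a b := fun t ht =>
      ⟨lt_of_lt_of_le hx.1 ht.1, lt_of_le_of_lt ht.2 hy.2⟩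
    have hcont : ContinuousOn f (Icc x y) := fun t ht =>
      ((hd t (hsub ht)).continuousAt).continuousWithinAt
    exact constant_of_has_deriv_right_zero hcont
      (fun t ht => (hd t (hsub (Ico_subset_Icc_self ht))).hasDerivWithinAt)
      y (right_mem_Icc.2 hxy)
  intro x hx y hy
  rcases le_total x y with h | h
  · exact (key x hx y hy h).symm
  · exact key y hy x hx h

/-- At a global minimum the second derivative is nonnegative. -/
lemma second_deriv_nonneg_at_min {f f' f'' : ℝ → ℝ} {m : ℝ}
    (h1 : ∀ t, HasDerivAt f (f' t) t) (h2 : HasDerivAt f' (f'' m) m)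
    (hmin : ∀ t, f m ≤ f t) : 0 ≤ f'' m := by
  have hf'0 : f' m = 0 := by
    have hloc : IsLocalMin f m := Filter.Eventually.of_forall hmin
    exact hloc.hasDerivAt_eq_zero (h1 m)
  by_contra h
  push_neg at h
  -- slope of f' tends to f'' m < 0, so f' < 0 just to the right of m
  have hslope : Filter.Tendsto (slope f' m) (nhdsWithin m {m}ᶜ) (nhds (f'' m)) :=
    hasDerivAt_iff_tendsto_slope.1 h2
  have hev : ∀ᶠ t in nhdsWithin m {m}ᶜ, slope f' m t < 0 :=
    hslope.eventually_lt_const h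
  have hev' : ∀ᶠ t in nhdsWithin m (Ioi m), slope f' m t < 0 :=
    nhdsWithin_mono m (fun t (ht : m < t) => ne_of_gt ht) hev
  rw [Filter.eventually_iff] at hev'
  rw [mem_nhdsGT_iff_exists_Ioo_subset] at hev'
  obtain ⟨u, hu, hsub⟩ := hev'
  have hu' : m < u := hu
  have hneg : ∀ t ∈ Ioo m u, f' t < 0 := by
    intro t ht
    have hs : slope f' m t < 0 := hsub ht
    rw [slope_def_field, hf'0, sub_zero] at hs
    have htm : 0 < t - m := sub_pos.2 ht.1
    by_contra hge
    push_neg at hge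
    exact absurd hs (not_lt.2 (div_nonneg hge htm.le))
  -- f is strictly decreasing on [m, u], contradicting the minimum
  have hanti : StrictAntiOn f (Icc m u) := by
    apply strictAntiOn_of_deriv_neg (convex_Icc m u)
    · exact fun t _ => ((h1 t).continuousAt).continuousWithinAt
    · intro t ht
      rw [interior_Icc] at ht
      rw [(h1 t).deriv]
      exact hneg t ht
  have hmem : (m + u) / 2 ∈ Icc m u := ⟨by linarith, by linarith⟩
  have : f ((m + u) / 2) < f m :=
    hanti (left_mem_Icc.2 hu'.le) hmem (by linarith)
  exact absurd (hmin ((m + u) / 2)) (not_le.2 this)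

theorem bernoulli_sign_lambda_lt_one
    (lam P : ℝ) (hlam0 : 0 < lam) (hlam1 : lam < 1) :
    ((∀ ψ ψ' ψ'' : ℝ → ℝ,
      (∀ θ : ℝ, HasDerivAt ψ (ψ' θ) θ) →
      (∀ θ : ℝ, HasDerivAt ψ' (ψ'' θ) θ) →
      (∀ θ : ℝ, ψ (θ + 2 * Real.pi) = ψ θ) →
      (∀ θ : ℝ, 0 < ψ θ) →
      (∀ θ : ℝ, 2 * (lam - 1) * P =
        -(lam - 1) * (ψ' θ) ^ 2 + lam ^ 2 * (ψ θ) ^ 2 + lam * (ψ'' θ) * (ψ θ)) →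
      ∀ θ : ℝ, (2 * P + lam ^ 2 * (ψ θ) ^ 2 + (ψ' θ) ^ 2) * (ψ θ) ^ (2 / lam - 2) < 0)) ∧
    ((∀ a b : ℝ, a < b → ∀ ψ ψ' ψ'' : ℝ → ℝ,
      ContinuousOn ψ (Set.Icc a b) →
      ψ a = 0 → ψ b = 0 →
      (∀ θ ∈ Set.Ioo a b, 0 < ψ θ) →
      (∀ θ ∈ Set.Ioo a b, HasDerivAt ψ (ψ' θ) θ) →
      (∀ θ ∈ Set.Ioo a b, HasDerivAt ψ' (ψ'' θ) θ) →
      (∀ θ ∈ Set.Ioo a b, 2 * (lam - 1) * P =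
        -(lam - 1) * (ψ' θ) ^ 2 + lam ^ 2 * (ψ θ) ^ 2 + lam * (ψ'' θ) * (ψ θ)) →
      ∀ θ ∈ Set.Ioo a b,
        0 ≤ (2 * P + lam ^ 2 * (ψ θ) ^ 2 + (ψ' θ) ^ 2) * (ψ θ) ^ (2 / lam - 2))) := by
  constructor
  · -- Part (i)
    intro ψ ψ' ψ'' h1 h2 hper hpos hode θ
    set B : ℝ → ℝ := fun t => (2 * P + lam ^ 2 * (ψ t) ^ 2 + (ψ' t) ^ 2) * (ψ t) ^ (2 / lam - 2)
      with hB
    have hBd : ∀ t, HasDerivAt B 0 t := fun t =>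
      bern_deriv_zero lam P hlam0 (hpos t) (h1 t) (h2 t) (hode t)
    -- find a global minimum using periodicity
    have hcψ : Continuous ψ := by
      have : Differentiable ℝ ψ := fun t => (h1 t).differentiableAt
      exact this.continuous
    have h2pi : (0:ℝ) < 2 * Real.pi := by positivity
    obtain ⟨m, hmIcc, hmin'⟩ := isCompact_Icc.exists_isMinOn
      (nonempty_Icc.2 (by linarith)) (hcψ.continuousOn (s := Icc 0 (2 * Real.pi)))
    have hper' : Function.Periodic ψ (2 * Real.pi) := hper
    have hmin : ∀ t, ψ m ≤ ψ t := by
      intro t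
      have hk := Int.sub_floor_div_mul_nonneg t h2pi
      have hk' := Int.sub_floor_div_mul_lt t h2pi
      have hval : ψ (t - (⌊t / (2 * Real.pi)⌋ : ℤ) * (2 * Real.pi)) = ψ t :=
        hper'.sub_int_mul_eq _
      have hmem : t - (⌊t / (2 * Real.pi)⌋ : ℤ) * (2 * Real.pi) ∈ Icc 0 (2 * Real.pi) := by
        constructor
        · linarith
        · linarith
      calc ψ m ≤ ψ (t - (⌊t / (2 * Real.pi)⌋ : ℤ) * (2 * Real.pi)) := hmin' hmem
        _ = ψ t := hval
    have hloc : IsLocalMin ψ m := Filter.Eventually.of_forall hmin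
    have hf'0 : ψ' m = 0 := hloc.hasDerivAt_eq_zero (h1 m)
    have hf''0 : 0 ≤ ψ'' m := second_deriv_nonneg_at_min h1 (h2 m) hmin
    -- B m < 0
    have hodem := hode m
    rw [hf'0] at hodem
    have hψm := hpos m
    have hFneg : 2 * P + lam ^ 2 * (ψ m) ^ 2 + (ψ' m) ^ 2 < 0 := by
      rw [hf'0]
      nlinarith [mul_nonneg (mul_nonneg hlam0.le hf''0) hψm.le,
        mul_pos (mul_pos hlam0 (mul_pos hlam0 hlam0)) (mul_pos hψm hψm)]
    have hBm : B m < 0 :=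
      mul_neg_of_neg_of_pos hFneg (Real.rpow_pos_of_pos hψm _)
    have hBdiff : Differentiable ℝ B := fun t => (hBd t).differentiableAt
    have hconst : B θ = B m :=
      is_const_of_deriv_eq_zero hBdiff (fun t => (hBd t).deriv) θ m
    calc (2 * P + lam ^ 2 * (ψ θ) ^ 2 + (ψ' θ) ^ 2) * (ψ θ) ^ (2 / lam - 2)
        = B θ := rfl
      _ = B m := hconst
      _ < 0 := hBm
  · -- Part (ii)
    intro a b hab ψ ψ' ψ'' hcont ha hb hpos h1 h2 hode θ hθ
    set B : ℝ → ℝ := fun t => (2 * P + lam ^ 2 * (ψ t) ^ 2 + (ψ' t) ^ 2) * (ψ t) ^ (2 / lam - 2)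
      with hB
    have hBd : ∀ t ∈ Ioo a b, HasDerivAt B 0 t := fun t ht =>
      bern_deriv_zero lam P hlam0 (hpos t ht) (h1 t ht) (h2 t ht) (hode t ht)
    have hconst := const_of_deriv0_Ioo hBd
    have he : (0:ℝ) < 2 / lam - 2 := by
      rw [sub_pos, lt_div_iff₀ hlam0]
      linarith
    set l := nhdsWithin a (Ioi a) with hl
    have hmemIoo : Ioo a b ∈ l := Ioo_mem_nhdsGT_of_mem ⟨le_refl a, hab⟩
    have hmemIcc : Icc a b ∈ l := Filter.mem_of_superset hmemIoo Ioo_subset_Icc_self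
    have hψa : Filter.Tendsto ψ l (nhds 0) := by
      have h0 : Filter.Tendsto ψ (nhdsWithin a (Icc a b)) (nhds (ψ a)) :=
        hcont a (left_mem_Icc.2 hab.le)
      rw [ha] at h0
      exact h0.mono_left (nhdsWithin_le_of_mem hmemIcc)
    have hrpow : Filter.Tendsto (fun t => (ψ t) ^ (2 / lam - 2)) l (nhds 0) := by
      have hc : ContinuousAt (fun x : ℝ => x ^ (2 / lam - 2)) 0 :=
        Real.continuousAt_rpow_const 0 _ (Or.inr he.le)
      have := hc.tendsto.comp hψa
      rwa [Real.zero_rpow he.ne'] at this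
    have hcoef : Filter.Tendsto (fun t => 2 * P + lam ^ 2 * (ψ t) ^ 2) l
        (nhds (2 * P + lam ^ 2 * 0 ^ 2)) := by
      exact ((hψa.pow 2).const_mul (lam ^ 2)).const_add (2 * P)
    have hg : Filter.Tendsto (fun t => (2 * P + lam ^ 2 * (ψ t) ^ 2) * (ψ t) ^ (2 / lam - 2))
        l (nhds 0) := by
      have := hcoef.mul hrpow
      simpa using this
    have hge : ∀ᶠ t in l, (2 * P + lam ^ 2 * (ψ t) ^ 2) * (ψ t) ^ (2 / lam - 2) ≤ B θ := by
      filter_upwards [hmemIoo] with t ht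
      have hBt : B t = B θ := hconst t ht θ hθ
      have hr : (0:ℝ) ≤ (ψ t) ^ (2 / lam - 2) := (Real.rpow_pos_of_pos (hpos t ht) _).le
      have : (2 * P + lam ^ 2 * (ψ t) ^ 2) * (ψ t) ^ (2 / lam - 2) ≤ B t := by
        rw [hB]
        have h2 : (0:ℝ) ≤ (ψ' t) ^ 2 * (ψ t) ^ (2 / lam - 2) :=
          mul_nonneg (sq_nonneg _) hr
        nlinarith [h2]
      linarith [this, hBt.le, hBt.ge]
    exact le_of_tendsto hg hge
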